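/- Let U ∈ G_k P_n and b ∈ ℂ. Then ord_b W(U) = kℓ − N(λ), where λ is the b-shape of U, ℓ = n + 1 − k, and N(λ) is the total of λ. In particular, b is a root of the Wronskian W(U) if and only if the b-shape of U is not the full k×ℓ rectangle. -/

import Mathlib

open Polynomial Finset

/-- The Wronskian `W(p_1, …, p_k) = det(p_i^{(j−1)})_{1≤i,j≤k}`. -/
noncomputable def wronskian' (k : ℕ) (p : Fin k → Polynomial ℂ) : Polynomial ℂ :=
  Matrix.det (Matrix.of fun i j : Fin k =>
    (fun q : Polynomial ℂ => Polynomial.derivative q)^[(j : ℕ)] (p i))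

lemma coeff_prod_zero {ι : Type*} (s : Finset ι) (f : ι → Polynomial ℂ) (μ : ι → ℕ)
    (h : ∀ i ∈ s, ∀ m < μ i, (f i).coeff m = 0) :
    ∀ m < ∑ i ∈ s, μ i, (∏ i ∈ s, f i).coeff m = 0 := by
  induction s using Finset.cons_induction with
  | empty => intro m hm; simp at hm
  | cons a s ha ih =>
    intro m hm
    rw [Finset.prod_cons, Polynomial.coeff_mul]
    apply Finset.sum_eq_zero
    rintro ⟨x, y⟩ hxy
    rw [Finset.HasAntidiagonal.mem_antidiagonal] at hxy
    rw [Finset.sum_cons] at hm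
    by_cases hx : x < μ a
    · rw [h a (Finset.mem_cons_self a s) x hx, zero_mul]
    · have hy : y < ∑ i ∈ s, μ i := by omega
      rw [ih (fun i hi => h i (Finset.mem_cons_of_mem hi)) y hy, mul_zero]

lemma coeff_prod_exact {ι : Type*} (s : Finset ι) (f : ι → Polynomial ℂ) (μ : ι → ℕ)
    (h : ∀ i ∈ s, ∀ m < μ i, (f i).coeff m = 0) :
    (∏ i ∈ s, f i).coeff (∑ i ∈ s, μ i) = ∏ i ∈ s, (f i).coeff (μ i) := by
  induction s using Finset.cons_induction with
  | empty => simp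
  | cons a s ha ih =>
    rw [Finset.prod_cons, Finset.sum_cons, Polynomial.coeff_mul, Finset.prod_cons,
      ← ih (fun i hi => h i (Finset.mem_cons_of_mem hi))]
    apply Finset.sum_eq_single_of_mem (μ a, ∑ i ∈ s, μ i)
      (Finset.HasAntidiagonal.mem_antidiagonal.mpr rfl)
    rintro ⟨x, y⟩ hxy hne
    rw [Finset.HasAntidiagonal.mem_antidiagonal] at hxy
    by_cases hx : x < μ a
    · rw [h a (Finset.mem_cons_self a s) x hx, zero_mul]
    · have : x ≠ μ a := by
        intro he; apply hne; simp only [he, Prod.mk.injEq, true_and]; omega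
      have hy : y < ∑ i ∈ s, μ i := by omega
      rw [coeff_prod_zero s f μ (fun i hi => h i (Finset.mem_cons_of_mem hi)) y hy, mul_zero]

lemma iterate_derivative_comp_X_add_C (q : Polynomial ℂ) (b : ℂ) (j : ℕ) :
    derivative^[j] (q.comp (X + C b)) = (derivative^[j] q).comp (X + C b) := by
  induction j with
  | zero => rfl
  | succ j ih =>
    rw [Function.iterate_succ_apply', ih, derivative_comp, Function.iterate_succ_apply']
    simp

lemma wronskian'_comp (k : ℕ) (p : Fin k → Polynomial ℂ) (b : ℂ) :
    (wronskian' k p).comp (X + C b) = wronskian' k (fun i => (p i).comp (X + C b)) := by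
  rw [wronskian', wronskian', comp_eq_aeval]
  rw [AlgHom.map_det (aeval (X + C b) : Polynomial ℂ →ₐ[ℂ] Polynomial ℂ)]
  congr 1
  apply Matrix.ext
  intro i j
  simp only [AlgHom.mapMatrix_apply, Matrix.map_apply, Matrix.of_apply]
  rw [← comp_eq_aeval, iterate_derivative_comp_X_add_C]

lemma fin_le_of_strictMono {k : ℕ} {ν : Fin k → ℕ} (hν : StrictMono ν) (i : Fin k) :
    (i : ℕ) ≤ ν i := by
  obtain ⟨m, hm⟩ : ∃ m, (i : ℕ) = m := ⟨_, rfl⟩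
  induction m generalizing i with
  | zero => omega
  | succ m ih =>
    have hlt : m < k := by omega
    have h1 : (⟨m, hlt⟩ : Fin k) < i := by simp [Fin.lt_def]; omega
    have h2 : m ≤ ν ⟨m, hlt⟩ := by simpa using ih ⟨m, hlt⟩ rfl
    have h3 : ν ⟨m, hlt⟩ < ν i := hν h1
    omega

lemma fin_gap_of_strictMono {k : ℕ} {ν : Fin k → ℕ} (hν : StrictMono ν) :
    ∀ d (a c : Fin k), (a : ℕ) + d = (c : ℕ) → ν a + d ≤ ν c := by
  intro d
  induction d with
  | zero => intro a c h; have : a = c := Fin.ext (by omega); simp [this]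
  | succ d ih =>
    intro a c h
    have hlt : (a : ℕ) + d < k := by have := c.isLt; omega
    have h1 : ν a + d ≤ ν ⟨(a : ℕ) + d, hlt⟩ := ih a ⟨(a : ℕ) + d, hlt⟩ rfl
    have h2 : (⟨(a : ℕ) + d, hlt⟩ : Fin k) < c := by simp [Fin.lt_def]; omega
    have h3 : ν ⟨(a : ℕ) + d, hlt⟩ < ν c := hν h2
    omega

lemma wronskian'_coeff (k : ℕ) (q : Fin k → Polynomial ℂ) (ν : Fin k → ℕ) (hν : StrictMono ν)
    (hlow : ∀ i, ∀ m < ν i, (q i).coeff m = 0)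
    (hne : ∀ i, (q i).coeff (ν i) ≠ 0) :
    (∀ m < (∑ i, ν i) - (∑ i : Fin k, (i : ℕ)), (wronskian' k q).coeff m = 0) ∧
    (wronskian' k q).coeff ((∑ i, ν i) - ∑ i : Fin k, (i : ℕ)) ≠ 0 := by
  set N := (∑ i, ν i) - (∑ i : Fin k, (i : ℕ)) with hNdef
  have hTS : (∑ i : Fin k, (i : ℕ)) ≤ ∑ i, ν i :=
    Finset.sum_le_sum fun i _ => fin_le_of_strictMono hν i
  have hN : N + (∑ i : Fin k, (i : ℕ)) = ∑ i, ν i := by omega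
  have hent : ∀ (i : Fin k) (j : ℕ) (m : ℕ), m + j < ν i →
      (derivative^[j] (q i)).coeff m = 0 := by
    intro i j m hm
    rw [Polynomial.coeff_iterate_derivative, hlow i (m + j) hm, smul_zero]
  have hperm : ∀ σ : Equiv.Perm (Fin k), N ≤ ∑ i : Fin k, (ν (σ i) - (i : ℕ)) := by
    intro σ
    have h1 : ∑ i : Fin k, ν (σ i) = ∑ i, ν i := Equiv.sum_comp σ ν
    have h2 : ∑ i : Fin k, ν (σ i) ≤ ∑ i : Fin k, ((ν (σ i) - (i : ℕ)) + (i : ℕ)) :=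
      Finset.sum_le_sum fun i _ => le_tsub_add
    rw [Finset.sum_add_distrib] at h2
    omega
  have hvanish : ∀ (σ : Equiv.Perm (Fin k)) (m : ℕ),
      m < ∑ i : Fin k, (ν (σ i) - (i : ℕ)) →
      (∏ i : Fin k, derivative^[(i : ℕ)] (q (σ i))).coeff m = 0 := by
    intro σ m hm
    refine coeff_prod_zero univ _ (fun i => ν (σ i) - (i : ℕ)) ?_ m hm
    intro i _ m' hm'
    have hm2 : m' < ν (σ i) - (i : ℕ) := hm'
    exact hent (σ i) (i : ℕ) m' (by omega)
  have hdet : ∀ m : ℕ, (wronskian' k q).coeff m =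
      ∑ σ : Equiv.Perm (Fin k), (Equiv.Perm.sign σ : ℤ) •
        (∏ i : Fin k, derivative^[(i : ℕ)] (q (σ i))).coeff m := by
    intro m
    rw [wronskian', Matrix.det_apply]
    rw [Polynomial.finset_sum_coeff]
    refine Finset.sum_congr rfl fun σ _ => ?_
    rw [Polynomial.coeff_smul]
    rfl
  constructor
  · intro m hm
    rw [hdet]
    apply Finset.sum_eq_zero
    intro σ _
    rw [hvanish σ m (lt_of_lt_of_le hm (hperm σ)), smul_zero]
  · have hmain : (wronskian' k q).coeff N =
        (Matrix.of fun i j : Fin k =>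
          (q i).coeff (ν i) * ((ν i).descFactorial (j : ℕ) : ℂ)).det := by
      rw [hdet, Matrix.det_apply]
      refine Finset.sum_congr rfl fun σ _ => ?_
      congr 1
      by_cases hcase : ∀ i : Fin k, (i : ℕ) ≤ ν (σ i)
      · have hsum : ∑ i : Fin k, (ν (σ i) - (i : ℕ)) = N := by
          have : ∑ i : Fin k, ((ν (σ i) - (i : ℕ)) + (i : ℕ)) = ∑ i : Fin k, ν (σ i) := by
            refine Finset.sum_congr rfl fun i _ => ?_
            have := hcase i; omega
          rw [Finset.sum_add_distrib] at this
          have h1 : ∑ i : Fin k, ν (σ i) = ∑ i, ν i := Equiv.sum_comp σ ν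
          omega
        rw [← hsum, coeff_prod_exact univ _ _
          (fun i _ m' hm' => hent (σ i) (i : ℕ) m'
            (by have hm2 : m' < ν (σ i) - (i : ℕ) := hm'; have := hcase i; omega))]
        refine Finset.prod_congr rfl fun i _ => ?_
        rw [Polynomial.coeff_iterate_derivative, Matrix.of_apply]
        have hi := hcase i
        have he : ν (σ i) - (i : ℕ) + (i : ℕ) = ν (σ i) := by omega
        rw [he, nsmul_eq_mul, mul_comm]
      · push_neg at hcase
        obtain ⟨i₀, hi₀⟩ := hcase
        have hlt : N < ∑ i : Fin k, (ν (σ i) - (i : ℕ)) := by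
          have h2 : ∑ i : Fin k, ν (σ i) < ∑ i : Fin k, ((ν (σ i) - (i : ℕ)) + (i : ℕ)) := by
            refine Finset.sum_lt_sum (fun i _ => le_tsub_add) ⟨i₀, Finset.mem_univ i₀, ?_⟩
            omega
          rw [Finset.sum_add_distrib] at h2
          have h1 : ∑ i : Fin k, ν (σ i) = ∑ i, ν i := Equiv.sum_comp σ ν
          omega
        rw [hvanish σ N hlt]
        symm
        apply Finset.prod_eq_zero (Finset.mem_univ i₀)
        rw [Matrix.of_apply, Nat.descFactorial_eq_zero_iff_lt.mpr hi₀]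
        simp
    rw [hmain]
    rw [show (Matrix.of fun i j : Fin k =>
          (q i).coeff (ν i) * ((ν i).descFactorial (j : ℕ) : ℂ)) =
        Matrix.of (fun i j : Fin k => (fun i => (q i).coeff (ν i)) i *
          (Matrix.of (fun i j : Fin k => ((ν i).descFactorial (j : ℕ) : ℂ))) i j) from rfl]
    rw [Matrix.det_mul_column]
    have hvd : (Matrix.of fun i j : Fin k => ((ν i).descFactorial (j : ℕ) : ℂ)).det =
        (Matrix.vandermonde fun i : Fin k => ((ν i : ℕ) : ℂ)).det := by
      rw [Matrix.det_eval_matrixOfPolynomials_eq_det_vandermonde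
        (fun i : Fin k => ((ν i : ℕ) : ℂ)) (fun j : Fin k => descPochhammer ℂ (j : ℕ))
        (fun j => descPochhammer_natDegree ℂ (j : ℕ))
        (fun j => monic_descPochhammer ℂ (j : ℕ))]
      congr 1
      apply Matrix.ext
      intro i j
      simp only [Matrix.of_apply]
      rw [descPochhammer_eval_eq_descFactorial]
    rw [hvd]
    apply mul_ne_zero
    · exact Finset.prod_ne_zero_iff.mpr fun i _ => hne i
    · rw [Matrix.det_vandermonde_ne_zero_iff]
      exact fun a c hac => hν.injective (Nat.cast_injective hac)

theorem wronskian_order_at_root (k n : ℕ) (hk : k ≤ n + 1)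
    (p : Fin k → Polynomial ℂ) (hdeg : ∀ i, (p i).natDegree ≤ n)
    (hind : LinearIndependent ℂ p) (b : ℂ)
    (ν : Fin k → ℕ) (hν : StrictMono ν)
    (hpiv : ∀ m : ℕ,
      (∃ q ∈ Submodule.span ℂ (Set.range p), q ≠ 0 ∧ Polynomial.rootMultiplicity b q = m)
        ↔ m ∈ Set.range ν) :
    Polynomial.rootMultiplicity b (wronskian' k p) =
      k * (n + 1 - k) - ∑ j : Fin k, ((n + 1 - k) + (j : ℕ) - ν j) ∧
    ((wronskian' k p).eval b = 0 ↔
      ∃ j : Fin k, (n + 1 - k) + (j : ℕ) - ν j ≠ n + 1 - k) := by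
  classical
  -- choose representatives with prescribed order
  have hex : ∀ i : Fin k, ∃ g, g ∈ Submodule.span ℂ (Set.range p) ∧ g ≠ 0 ∧
      Polynomial.rootMultiplicity b g = ν i := by
    intro i
    obtain ⟨g, hg1, hg2, hg3⟩ := (hpiv (ν i)).mpr ⟨i, rfl⟩
    exact ⟨g, hg1, hg2, hg3⟩
  choose g hgspan hgne hgrm using hex
  set G : Fin k → Polynomial ℂ := fun i => (g i).comp (X + C b) with hGdef
  have hGne : ∀ i, G i ≠ 0 := fun i => comp_X_add_C_ne_zero_iff.mpr (hgne i)
  have hGnt : ∀ i, (G i).natTrailingDegree = ν i := fun i => by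
    rw [← rootMultiplicity_eq_natTrailingDegree]; exact hgrm i
  have hlow : ∀ i, ∀ m < ν i, (G i).coeff m = 0 := fun i m hm =>
    coeff_eq_zero_of_lt_natTrailingDegree (by rw [hGnt i]; exact hm)
  have hneG : ∀ i, (G i).coeff (ν i) ≠ 0 := fun i => by
    rw [← hGnt i]
    exact trailingCoeff_nonzero_iff_nonzero.mpr (hGne i)
  -- change of basis matrix
  choose A hA using fun i => (Submodule.mem_span_range_iff_exists_fun ℂ).mp (hgspan i)
  set M : Matrix (Fin k) (Fin k) ℂ := Matrix.of A with hMdef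
  have hdetM : M.det ≠ 0 := by
    intro hdet
    obtain ⟨v, hv0, hvM⟩ := Matrix.exists_vecMul_eq_zero_iff.mpr hdet
    have hcol : ∀ l, ∑ i, v i * A i l = 0 := by
      intro l
      have := congrFun hvM l
      simpa [Matrix.vecMul, dotProduct, hMdef] using this
    have hzero : ∑ i, v i • g i = 0 := by
      calc ∑ i, v i • g i = ∑ i, ∑ l, (v i * A i l) • p l := by
            refine Finset.sum_congr rfl fun i _ => ?_
            rw [← hA i, Finset.smul_sum]
            exact Finset.sum_congr rfl fun l _ => smul_smul (v i) (A i l) (p l)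
        _ = ∑ l, ∑ i, (v i * A i l) • p l := Finset.sum_comm
        _ = ∑ l, (∑ i, v i * A i l) • p l := by
            refine Finset.sum_congr rfl fun l _ => ?_
            rw [Finset.sum_smul]
        _ = 0 := by simp [hcol]
    obtain ⟨i₁, hi₁⟩ : ∃ i, v i ≠ 0 := Function.ne_iff.mp hv0
    set T : Finset (Fin k) := univ.filter (fun i => v i ≠ 0) with hTdef
    have hTne : T.Nonempty := ⟨i₁, by simp [hTdef, hi₁]⟩
    set i₀ := T.min' hTne with hi₀def
    have hi₀T : i₀ ∈ T := T.min'_mem hTne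
    have hvi₀ : v i₀ ≠ 0 := by
      have := hi₀T
      simp [hTdef] at this
      exact this
    have hcoeff : ((∑ i, v i • g i).comp (X + C b)).coeff (ν i₀) =
        v i₀ * (G i₀).coeff (ν i₀) := by
      rw [comp_eq_aeval, map_sum]
      have habs : ∀ i, (aeval (X + C b)) (v i • g i) = v i • G i := fun i => by
        rw [map_smul, ← comp_eq_aeval]
      simp_rw [habs]
      rw [Polynomial.finset_sum_coeff]
      rw [Finset.sum_eq_single_of_mem i₀ (Finset.mem_univ i₀)]
      · rw [Polynomial.coeff_smul]; rfl
      · intro i _ hii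
        rw [Polynomial.coeff_smul]
        by_cases hvi : v i = 0
        · simp [hvi]
        · have hiT : i ∈ T := by simp [hTdef, hvi]
          have hlt : i₀ < i := lt_of_le_of_ne (T.min'_le i hiT) (Ne.symm hii)
          rw [hlow i (ν i₀) (hν hlt), smul_zero]
    rw [hzero] at hcoeff
    simp only [zero_comp, Polynomial.coeff_zero] at hcoeff
    exact (mul_ne_zero hvi₀ (hneG i₀)) hcoeff.symm
  -- Wronskian transformation under change of basis
  have hrel : wronskian' k g = C M.det * wronskian' k p := by
    rw [wronskian', wronskian']
    have hmat : (Matrix.of fun i j : Fin k =>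
        (fun q : Polynomial ℂ => Polynomial.derivative q)^[(j : ℕ)] (g i)) =
        (M.map (C : ℂ →+* Polynomial ℂ)) * (Matrix.of fun i j : Fin k =>
          (fun q : Polynomial ℂ => Polynomial.derivative q)^[(j : ℕ)] (p i)) := by
      apply Matrix.ext
      intro i j
      rw [Matrix.mul_apply]
      simp only [Matrix.map_apply, Matrix.of_apply, hMdef]
      rw [← hA i, Polynomial.iterate_derivative_sum]
      refine Finset.sum_congr rfl fun l _ => ?_
      rw [Polynomial.iterate_derivative_smul, Polynomial.smul_eq_C_mul]
    rw [hmat, Matrix.det_mul, ← RingHom.mapMatrix_apply, ← RingHom.map_det]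
  -- order computation for the good basis
  have hWG := wronskian'_coeff k G ν hν hlow hneG
  set Nval := (∑ i, ν i) - ∑ i : Fin k, (i : ℕ) with hNdef
  have hWGcomp : (wronskian' k g).comp (X + C b) = wronskian' k G := by
    rw [wronskian'_comp k g b]
  have hWGne : wronskian' k G ≠ 0 := fun h => hWG.2 (by rw [h, Polynomial.coeff_zero])
  have hWgne : wronskian' k g ≠ 0 := fun h => hWGne (by rw [← hWGcomp, h, zero_comp])
  have hWpne : wronskian' k p ≠ 0 := by
    intro h; exact hWgne (by rw [hrel, h, mul_zero])
  have hntWG : (wronskian' k G).natTrailingDegree = Nval :=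
    le_antisymm (natTrailingDegree_le_of_ne_zero hWG.2)
      (le_natTrailingDegree hWGne hWG.1)
  have hrmWg : Polynomial.rootMultiplicity b (wronskian' k g) = Nval := by
    rw [rootMultiplicity_eq_natTrailingDegree, hWGcomp, hntWG]
  have hrmWp : Polynomial.rootMultiplicity b (wronskian' k p) = Nval := by
    rw [hrel] at hrmWg
    rw [Polynomial.rootMultiplicity_mul (by rw [← hrel]; exact hWgne),
      Polynomial.rootMultiplicity_C, zero_add] at hrmWg
    exact hrmWg
  -- degree bounds on pivots
  have hνn : ∀ i, ν i ≤ n := by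
    intro i
    have h1 : (X - C b) ^ (ν i) ∣ g i := by
      rw [← hgrm i]; exact Polynomial.pow_rootMultiplicity_dvd _ _
    have h2 := Polynomial.natDegree_le_of_dvd h1 (hgne i)
    have h3 : ((X - C b) ^ (ν i)).natDegree = ν i := by
      rw [Polynomial.natDegree_pow, Polynomial.natDegree_X_sub_C, mul_one]
    have h4 : (g i).natDegree ≤ n := by
      rw [← hA i]
      exact Polynomial.natDegree_sum_le_of_forall_le _ _ fun l _ =>
        le_trans (Polynomial.natDegree_smul_le _ _) (hdeg l)
    omega
  have hstep : ∀ j : Fin k, ν j ≤ (n + 1 - k) + (j : ℕ) := by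
    intro j
    have hk0 : 0 < k := j.pos
    have hlastlt : k - 1 < k := by omega
    have hlast : ν ⟨k - 1, hlastlt⟩ ≤ n := hνn _
    have hj := j.isLt
    have hgap : ν j + ((k - 1) - (j : ℕ)) ≤ ν ⟨k - 1, hlastlt⟩ :=
      fin_gap_of_strictMono hν ((k - 1) - (j : ℕ)) j ⟨k - 1, hlastlt⟩
        (show (j : ℕ) + ((k - 1) - (j : ℕ)) = k - 1 by omega)
    omega
  have hTS : (∑ i : Fin k, (i : ℕ)) ≤ ∑ i, ν i :=
    Finset.sum_le_sum fun i _ => fin_le_of_strictMono hν i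
  have hsum : ∑ j : Fin k, ((n + 1 - k) + (j : ℕ) - ν j) =
      (∑ j : Fin k, ((n + 1 - k) + (j : ℕ))) - ∑ j, ν j :=
    Finset.sum_tsub_distrib univ (fun j _ => hstep j)
  have has : ∑ j : Fin k, ((n + 1 - k) + (j : ℕ)) = k * (n + 1 - k) + ∑ j : Fin k, (j : ℕ) := by
    rw [Finset.sum_add_distrib, Finset.sum_const, Finset.card_univ, Fintype.card_fin,
      smul_eq_mul]
  have hSle : ∑ j, ν j ≤ k * (n + 1 - k) + ∑ j : Fin k, (j : ℕ) := by
    calc ∑ j, ν j ≤ ∑ j : Fin k, ((n + 1 - k) + (j : ℕ)) :=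
          Finset.sum_le_sum fun j _ => hstep j
      _ = _ := has
  constructor
  · rw [hrmWp, hsum, has, hNdef]
    omega
  · have h2 : (wronskian' k p).eval b = 0 ↔ 0 < Nval := by
      rw [← hrmWp]
      exact ⟨fun h => (Polynomial.rootMultiplicity_pos hWpne).mpr h,
        fun h => (Polynomial.rootMultiplicity_pos hWpne).mp h⟩
    rw [h2]
    constructor
    · intro h
      by_contra hcon
      push_neg at hcon
      have hall : ∀ j : Fin k, ν j = (j : ℕ) := by
        intro j
        have := hcon j
        have := hstep j
        have := fin_le_of_strictMono hν j
        omega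
      have : ∑ i, ν i = ∑ i : Fin k, (i : ℕ) :=
        Finset.sum_congr rfl fun i _ => hall i
      omega
    · rintro ⟨j, hj⟩
      have h3 : (j : ℕ) < ν j := by
        have := hstep j
        have := fin_le_of_strictMono hν j
        omega
      have h4 : (∑ i : Fin k, (i : ℕ)) < ∑ i, ν i :=
        Finset.sum_lt_sum (fun i _ => fin_le_of_strictMono hν i)
          ⟨j, Finset.mem_univ j, h3⟩
      omega
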